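/- arXiv:2511.15427 — 2 statements merged into one kernel-verified Lean document; each statement's English description precedes it below -/
import Mathlib

section
/- Let Θ₀ be an N×T matrix of rank at most R, let M_{Λ₀}, M_{Γ₀} be the orthogonal projections annihilating its column and row spaces, and let Δ be any N×T matrix. Then ‖Θ₀ + Δ‖_nuc ≥ ‖Θ₀‖_nuc + ‖M_{Λ₀} Δ M_{Γ₀}‖_nuc − ‖Δ − M_{Λ₀} Δ M_{Γ₀}‖_nuc. -/
open Matrix BigOperators MeasureTheory ProbabilityTheory

/-- The singular values of a real matrix `A`, defined as the square roots of the
eigenvalues of `Aᴴ * A` (not sorted). -/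
noncomputable def singularValues {N T : ℕ} (A : Matrix (Fin N) (Fin T) ℝ) : Fin T → ℝ :=
  fun j => Real.sqrt ((Matrix.isHermitian_conjTranspose_mul_self A).eigenvalues j)

/-- The nuclear norm of a real matrix: the sum of its singular values. -/
noncomputable def nuclearNorm {N T : ℕ} (A : Matrix (Fin N) (Fin T) ℝ) : ℝ :=
  ∑ j, singularValues A j

/-- The Frobenius norm of a real matrix. -/
noncomputable def frobNorm {N T : ℕ} (A : Matrix (Fin N) (Fin T) ℝ) : ℝ :=
  Real.sqrt (∑ i, ∑ j, (A i j)^2)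

/-- The operator (spectral) norm of a real matrix: its largest singular value. -/
noncomputable def opNorm {N T : ℕ} (A : Matrix (Fin N) (Fin T) ℝ) : ℝ :=
  ⨆ j, singularValues A j

namespace NucAux
variable {N T : ℕ}

noncomputable def Vm (A : Matrix (Fin N) (Fin T) ℝ) : Matrix (Fin T) (Fin T) ℝ :=
  ((Matrix.isHermitian_conjTranspose_mul_self A).eigenvectorUnitary : Matrix (Fin T) (Fin T) ℝ)

noncomputable def ev (A : Matrix (Fin N) (Fin T) ℝ) : Fin T → ℝ :=
  (Matrix.isHermitian_conjTranspose_mul_self A).eigenvalues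

lemma ev_nonneg (A : Matrix (Fin N) (Fin T) ℝ) (j : Fin T) : 0 ≤ ev A j :=
  Matrix.eigenvalues_conjTranspose_mul_self_nonneg A j

lemma hVV (A : Matrix (Fin N) (Fin T) ℝ) : (Vm A)ᴴ * Vm A = 1 := by
  have := ((Matrix.isHermitian_conjTranspose_mul_self A).eigenvectorUnitary).2
  exact (Matrix.mem_unitaryGroup_iff'.mp this)

lemma hVV' (A : Matrix (Fin N) (Fin T) ℝ) : Vm A * (Vm A)ᴴ = 1 := by
  have := ((Matrix.isHermitian_conjTranspose_mul_self A).eigenvectorUnitary).2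
  exact (Matrix.mem_unitaryGroup_iff.mp this)

lemma hdiag (A : Matrix (Fin N) (Fin T) ℝ) :
    (Vm A)ᴴ * (Aᴴ * A) * Vm A = Matrix.diagonal (ev A) := by
  have := (Matrix.isHermitian_conjTranspose_mul_self A).conjStarAlgAut_star_eigenvectorUnitary
  simpa [Vm, ev, Function.comp, Unitary.conjStarAlgAut_star_apply, Matrix.star_eq_conjTranspose,
    Matrix.mul_assoc] using this

lemma hspec (A : Matrix (Fin N) (Fin T) ℝ) :
    Aᴴ * A = Vm A * Matrix.diagonal (ev A) * (Vm A)ᴴ := by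
  have := (Matrix.isHermitian_conjTranspose_mul_self A).spectral_theorem
  simpa [Vm, ev, Function.comp, Matrix.star_eq_conjTranspose] using this

end NucAux
namespace NucAux
variable {N T : ℕ}

/-- `V * diagonal (f ∘ ev) * Vᴴ`. -/
noncomputable def cdiag (A : Matrix (Fin N) (Fin T) ℝ) (f : ℝ → ℝ) :
    Matrix (Fin T) (Fin T) ℝ :=
  Vm A * Matrix.diagonal (fun j => f (ev A j)) * (Vm A)ᴴ

lemma cdiag_mul (A : Matrix (Fin N) (Fin T) ℝ) (f g : ℝ → ℝ) :
    cdiag A f * cdiag A g = cdiag A (fun x => f x * g x) := by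
  unfold cdiag
  calc Vm A * Matrix.diagonal (fun j => f (ev A j)) * (Vm A)ᴴ *
      (Vm A * Matrix.diagonal (fun j => g (ev A j)) * (Vm A)ᴴ)
      = Vm A * (Matrix.diagonal (fun j => f (ev A j)) * ((Vm A)ᴴ * Vm A) *
        Matrix.diagonal (fun j => g (ev A j))) * (Vm A)ᴴ := by
        simp only [Matrix.mul_assoc]
    _ = Vm A * Matrix.diagonal (fun j => f (ev A j) * g (ev A j)) * (Vm A)ᴴ := by
        rw [hVV, Matrix.mul_one, Matrix.diagonal_mul_diagonal, Matrix.mul_assoc]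

lemma cdiag_conjTranspose (A : Matrix (Fin N) (Fin T) ℝ) (f : ℝ → ℝ) :
    (cdiag A f)ᴴ = cdiag A f := by
  unfold cdiag
  rw [Matrix.conjTranspose_mul, Matrix.conjTranspose_mul, Matrix.conjTranspose_conjTranspose,
    Matrix.diagonal_conjTranspose, Matrix.mul_assoc]
  congr 2

lemma trace_cdiag (A : Matrix (Fin N) (Fin T) ℝ) (f : ℝ → ℝ) :
    Matrix.trace (cdiag A f) = ∑ j, f (ev A j) := by
  unfold cdiag
  rw [Matrix.trace_mul_cycle, hVV, Matrix.one_mul, Matrix.trace_diagonal]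


lemma cdiag_congr (A : Matrix (Fin N) (Fin T) ℝ) {f g : ℝ → ℝ}
    (h : ∀ j, f (ev A j) = g (ev A j)) : cdiag A f = cdiag A g := by
  unfold cdiag
  congr 1
  · congr 1
    exact Matrix.diagonal_eq_diagonal_iff.mpr fun j => h j

lemma cdiag_spec (A : Matrix (Fin N) (Fin T) ℝ) : cdiag A id = Aᴴ * A := (hspec A).symm

end NucAux
namespace NucAux
variable {N T : ℕ}

noncomputable def sinv (x : ℝ) : ℝ := if x = 0 then 0 else (Real.sqrt x)⁻¹
noncomputable def pinvF (x : ℝ) : ℝ := if x = 0 then 0 else x⁻¹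
noncomputable def projF (x : ℝ) : ℝ := if x = 0 then 0 else 1

/-- The partial isometry `U = A * (AᴴA)^{-1/2}` from the polar decomposition. -/
noncomputable def Um (A : Matrix (Fin N) (Fin T) ℝ) : Matrix (Fin N) (Fin T) ℝ :=
  A * cdiag A sinv

lemma Um_conjTranspose_mul (A : Matrix (Fin N) (Fin T) ℝ) (B : Matrix (Fin N) (Fin T) ℝ) :
    (Um A)ᴴ * B = cdiag A sinv * (Aᴴ * B) := by
  rw [Um, Matrix.conjTranspose_mul, cdiag_conjTranspose, Matrix.mul_assoc]

lemma trace_Um (A : Matrix (Fin N) (Fin T) ℝ) :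
    Matrix.trace ((Um A)ᴴ * A) = nuclearNorm A := by
  rw [Um_conjTranspose_mul, ← cdiag_spec, cdiag_mul, trace_cdiag]
  unfold nuclearNorm singularValues
  apply Finset.sum_congr rfl
  intro j _
  have h0 : 0 ≤ ev A j := ev_nonneg A j
  show sinv (ev A j) * id (ev A j) = Real.sqrt (ev A j)
  unfold sinv
  by_cases h : ev A j = 0
  · simp [h]
  · have hs : Real.sqrt (ev A j) ≠ 0 := fun hc => h ((Real.sqrt_eq_zero h0).mp hc)
    simp only [h, if_false, id]
    rw [inv_mul_eq_iff_eq_mul₀ hs]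
    exact (Real.mul_self_sqrt h0).symm

lemma Um_mul_self (A : Matrix (Fin N) (Fin T) ℝ) :
    (Um A)ᴴ * Um A = cdiag A projF := by
  rw [Um_conjTranspose_mul, ← Matrix.mul_assoc, Um, ← Matrix.mul_assoc, Matrix.mul_assoc (cdiag A sinv),
    ← cdiag_spec, cdiag_mul, cdiag_mul]
  apply cdiag_congr
  intro j
  have h0 : 0 ≤ ev A j := ev_nonneg A j
  show sinv (ev A j) * id (ev A j) * sinv (ev A j) = projF (ev A j)
  unfold sinv projF
  by_cases h : ev A j = 0
  · simp [h]
  · have hx : Real.sqrt (ev A j) * Real.sqrt (ev A j) = ev A j := Real.mul_self_sqrt h0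
    simp only [h, if_false, id_eq]
    rw [mul_assoc, mul_comm (ev A j), ← mul_assoc, ← mul_inv, hx, inv_mul_cancel₀ h]

lemma proj_eq_left (A : Matrix (Fin N) (Fin T) ℝ) :
    cdiag A projF = cdiag A pinvF * (Aᴴ * A) := by
  rw [← cdiag_spec, cdiag_mul]
  apply cdiag_congr
  intro j
  show projF (ev A j) = pinvF (ev A j) * id (ev A j)
  unfold projF pinvF
  by_cases h : ev A j = 0 <;> simp [h]

lemma proj_eq_right (A : Matrix (Fin N) (Fin T) ℝ) :
    cdiag A projF = (Aᴴ * A) * cdiag A pinvF := by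
  rw [← cdiag_spec, cdiag_mul]
  apply cdiag_congr
  intro j
  show projF (ev A j) = id (ev A j) * pinvF (ev A j)
  unfold projF pinvF
  by_cases h : ev A j = 0 <;> simp [h]

lemma proj_idem (A : Matrix (Fin N) (Fin T) ℝ) :
    cdiag A projF * cdiag A projF = cdiag A projF := by
  rw [cdiag_mul]
  apply cdiag_congr
  intro j
  show projF (ev A j) * projF (ev A j) = projF (ev A j)
  unfold projF
  by_cases h : ev A j = 0 <;> simp [h]

end NucAux
namespace NucAux
variable {N T : ℕ}

lemma psd_of_symm_idem (Q : Matrix (Fin T) (Fin T) ℝ) (hs : Qᴴ = Q) (hi : Q * Q = Q)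
    (x : Fin T → ℝ) : 0 ≤ x ⬝ᵥ (Q *ᵥ x) := by
  have hQt : Qᵀ = Q := by rw [← Matrix.conjTranspose_eq_transpose_of_trivial, hs]
  have h1 : x ⬝ᵥ (Q *ᵥ x) = (Q *ᵥ x) ⬝ᵥ (Q *ᵥ x) := by
    conv_lhs => rw [← hi, ← Matrix.mulVec_mulVec]
    rw [Matrix.dotProduct_mulVec, ← hQt, Matrix.vecMul_transpose, hQt]
  rw [h1]
  exact Finset.sum_nonneg fun i _ => mul_self_nonneg _

lemma contraction_of_symm_idem (Q : Matrix (Fin T) (Fin T) ℝ) (hs : Qᴴ = Q) (hi : Q * Q = Q)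
    (x : Fin T → ℝ) : x ⬝ᵥ (Q *ᵥ x) ≤ x ⬝ᵥ x := by
  have hs' : (1 - Q)ᴴ = 1 - Q := by
    rw [Matrix.conjTranspose_sub, Matrix.conjTranspose_one, hs]
  have hi' : (1 - Q) * (1 - Q) = 1 - Q := by
    simp only [Matrix.sub_mul, Matrix.mul_sub, Matrix.one_mul, Matrix.mul_one, hi]
    abel
  have := psd_of_symm_idem (1 - Q) hs' hi' x
  rw [Matrix.sub_mulVec, dotProduct_sub, Matrix.one_mulVec] at this
  linarith

lemma dot_self_eq (A : Matrix (Fin N) (Fin T) ℝ) (x : Fin T → ℝ) :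
    (A *ᵥ x) ⬝ᵥ (A *ᵥ x) = x ⬝ᵥ ((Aᴴ * A) *ᵥ x) := by
  rw [← Matrix.mulVec_mulVec, Matrix.conjTranspose_eq_transpose_of_trivial,
    Matrix.mulVec_transpose, Matrix.dotProduct_mulVec, dotProduct_comm]

lemma dot_sq_sum (a : Fin N → ℝ) : ∑ i, a i ^ 2 = a ⬝ᵥ a := by
  simp [dotProduct, pow_two]

lemma dot_col (M W : Matrix (Fin T) (Fin T) ℝ) (j : Fin T) :
    (fun k => W k j) ⬝ᵥ (M *ᵥ fun k => W k j) = (Wᴴ * M * W) j j := by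
  simp only [Matrix.mul_assoc, Matrix.mul_apply, Matrix.mulVec, dotProduct,
    Matrix.conjTranspose_apply, star_trivial]
  simp only [Finset.mul_sum, Finset.sum_mul]
  rw [Finset.sum_comm]
  refine Finset.sum_congr rfl fun l _ => Finset.sum_congr rfl fun k _ => by ring

/-- Duality: the trace against a contraction is at most the nuclear norm. -/
lemma trace_le_nuclearNorm (A U : Matrix (Fin N) (Fin T) ℝ)
    (hU : ∀ x : Fin T → ℝ, x ⬝ᵥ ((Uᴴ * U) *ᵥ x) ≤ x ⬝ᵥ x) :
    Matrix.trace (Uᴴ * A) ≤ nuclearNorm A := by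
  have h1 : Matrix.trace (Uᴴ * A) = Matrix.trace ((U * Vm A)ᴴ * (A * Vm A)) := by
    calc Matrix.trace (Uᴴ * A) = Matrix.trace (Uᴴ * A * (Vm A * (Vm A)ᴴ)) := by
          rw [hVV', Matrix.mul_one]
      _ = Matrix.trace ((Vm A)ᴴ * (Uᴴ * A) * Vm A) := by
          rw [← Matrix.mul_assoc, Matrix.trace_mul_cycle]
      _ = Matrix.trace ((U * Vm A)ᴴ * (A * Vm A)) := by
          rw [Matrix.conjTranspose_mul]
          simp only [Matrix.mul_assoc]
  rw [h1, Matrix.trace]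
  have key : ∀ j : Fin T, ((U * Vm A)ᴴ * (A * Vm A)).diag j ≤ singularValues A j := by
    intro j
    set x : Fin T → ℝ := fun k => Vm A k j with hx
    have hfg : ((U * Vm A)ᴴ * (A * Vm A)).diag j = ∑ i, (U *ᵥ x) i * (A *ᵥ x) i := by
      simp only [Matrix.diag_apply, Matrix.mul_apply, Matrix.conjTranspose_apply, star_trivial]
      apply Finset.sum_congr rfl
      intro i _
      congr 1
    have hxx : x ⬝ᵥ x = 1 := by
      have h2 := dot_col (1 : Matrix (Fin T) (Fin T) ℝ) (Vm A) j
      rw [Matrix.mul_one, hVV, Matrix.one_mulVec, Matrix.one_apply_eq] at h2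
      exact h2
    have hg : ∑ i, (A *ᵥ x) i ^ 2 = ev A j := by
      rw [dot_sq_sum, dot_self_eq, hx, dot_col, hdiag, Matrix.diagonal_apply_eq]
    have hf : ∑ i, (U *ᵥ x) i ^ 2 ≤ 1 := by
      rw [dot_sq_sum, dot_self_eq]
      calc x ⬝ᵥ ((Uᴴ * U) *ᵥ x) ≤ x ⬝ᵥ x := hU x
        _ = 1 := hxx
    have hcs := Finset.sum_mul_sq_le_sq_mul_sq Finset.univ (fun i => (U *ᵥ x) i)
      (fun i => (A *ᵥ x) i)
    have hev : 0 ≤ ev A j := ev_nonneg A j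
    have hsq : (∑ i, (U *ᵥ x) i * (A *ᵥ x) i) ^ 2 ≤ ev A j := by
      calc (∑ i, (U *ᵥ x) i * (A *ᵥ x) i) ^ 2
          ≤ (∑ i, (U *ᵥ x) i ^ 2) * ∑ i, (A *ᵥ x) i ^ 2 := hcs
        _ ≤ 1 * ev A j := by
            rw [hg]
            exact mul_le_mul_of_nonneg_right hf hev
        _ = ev A j := one_mul _
    rw [hfg]
    exact Real.le_sqrt_of_sq_le hsq
  exact Finset.sum_le_sum fun j _ => key j

end NucAux
namespace NucAux
variable {N T : ℕ}

lemma Um_contraction (A : Matrix (Fin N) (Fin T) ℝ) (x : Fin T → ℝ) :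
    x ⬝ᵥ (((Um A)ᴴ * Um A) *ᵥ x) ≤ x ⬝ᵥ x := by
  rw [Um_mul_self]
  exact contraction_of_symm_idem _ (cdiag_conjTranspose _ _) (proj_idem _) x

lemma eigvals_congr {M M' : Matrix (Fin T) (Fin T) ℝ} (hM : M.IsHermitian)
    (hM' : M'.IsHermitian) (h : M = M') : hM.eigenvalues = hM'.eigenvalues := by
  subst h; rfl

lemma nuclearNorm_neg (A : Matrix (Fin N) (Fin T) ℝ) : nuclearNorm (-A) = nuclearNorm A := by
  unfold nuclearNorm singularValues
  have h : (-A)ᴴ * (-A) = Aᴴ * A := by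
    rw [Matrix.conjTranspose_neg, Matrix.neg_mul, Matrix.mul_neg, neg_neg]
  rw [eigvals_congr (Matrix.isHermitian_conjTranspose_mul_self (-A))
    (Matrix.isHermitian_conjTranspose_mul_self A) h]

lemma nuclearNorm_add_le (X Y : Matrix (Fin N) (Fin T) ℝ) :
    nuclearNorm (X + Y) ≤ nuclearNorm X + nuclearNorm Y := by
  rw [← trace_Um (X + Y)]
  have h : (Um (X + Y))ᴴ * (X + Y) = (Um (X + Y))ᴴ * X + (Um (X + Y))ᴴ * Y :=
    Matrix.mul_add _ _ _
  rw [h, Matrix.trace_add]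
  exact add_le_add (trace_le_nuclearNorm X _ (Um_contraction (X + Y)))
    (trace_le_nuclearNorm Y _ (Um_contraction (X + Y)))

lemma nuclearNorm_add_of_orth (A B : Matrix (Fin N) (Fin T) ℝ)
    (h1 : Aᴴ * B = 0) (h2 : A * Bᴴ = 0) :
    nuclearNorm A + nuclearNorm B ≤ nuclearNorm (A + B) := by
  have h1' : Bᴴ * A = 0 := by
    have := congrArg Matrix.conjTranspose h1
    simpa [Matrix.conjTranspose_mul] using this
  have h2' : B * Aᴴ = 0 := by
    have := congrArg Matrix.conjTranspose h2
    simpa [Matrix.conjTranspose_mul] using this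
  -- cross terms in traces
  have htrAB : (Um A)ᴴ * B = 0 := by rw [Um_conjTranspose_mul, h1, Matrix.mul_zero]
  have htrBA : (Um B)ᴴ * A = 0 := by rw [Um_conjTranspose_mul, h1', Matrix.mul_zero]
  -- cross terms in U
  have hUAB : (Um A)ᴴ * Um B = 0 := by
    rw [Um_conjTranspose_mul, Um, ← Matrix.mul_assoc Aᴴ B, h1, Matrix.zero_mul,
      Matrix.mul_zero]
  have hUBA : (Um B)ᴴ * Um A = 0 := by
    rw [Um_conjTranspose_mul, Um, ← Matrix.mul_assoc Bᴴ A, h1', Matrix.zero_mul,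
      Matrix.mul_zero]
  -- the sum of the two range projections
  have hUU : (Um A + Um B)ᴴ * (Um A + Um B) = cdiag A projF + cdiag B projF := by
    rw [Matrix.conjTranspose_add, Matrix.add_mul, Matrix.mul_add, Matrix.mul_add,
      Um_mul_self, Um_mul_self, hUAB, hUBA, add_zero, zero_add]
  have hmidAB : (Aᴴ * A) * (Bᴴ * B) = 0 := by
    calc (Aᴴ * A) * (Bᴴ * B) = Aᴴ * (A * Bᴴ * B) := by simp only [Matrix.mul_assoc]
      _ = 0 := by rw [h2, Matrix.zero_mul, Matrix.mul_zero]
  have hmidBA : (Bᴴ * B) * (Aᴴ * A) = 0 := by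
    calc (Bᴴ * B) * (Aᴴ * A) = Bᴴ * (B * Aᴴ * A) := by simp only [Matrix.mul_assoc]
      _ = 0 := by rw [h2', Matrix.zero_mul, Matrix.mul_zero]
  have hPQ : cdiag A projF * cdiag B projF = 0 := by
    rw [proj_eq_left A, proj_eq_right B]
    calc cdiag A pinvF * (Aᴴ * A) * (Bᴴ * B * cdiag B pinvF)
        = cdiag A pinvF * ((Aᴴ * A) * (Bᴴ * B) * cdiag B pinvF) := by
          simp only [Matrix.mul_assoc]
      _ = 0 := by rw [hmidAB, Matrix.zero_mul, Matrix.mul_zero]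
  have hQP : cdiag B projF * cdiag A projF = 0 := by
    rw [proj_eq_left B, proj_eq_right A]
    calc cdiag B pinvF * (Bᴴ * B) * (Aᴴ * A * cdiag A pinvF)
        = cdiag B pinvF * ((Bᴴ * B) * (Aᴴ * A) * cdiag A pinvF) := by
          simp only [Matrix.mul_assoc]
      _ = 0 := by rw [hmidBA, Matrix.zero_mul, Matrix.mul_zero]
  have hQs : (cdiag A projF + cdiag B projF)ᴴ = cdiag A projF + cdiag B projF := by
    rw [Matrix.conjTranspose_add, cdiag_conjTranspose, cdiag_conjTranspose]
  have hQi : (cdiag A projF + cdiag B projF) * (cdiag A projF + cdiag B projF)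
      = cdiag A projF + cdiag B projF := by
    rw [Matrix.add_mul, Matrix.mul_add, Matrix.mul_add, proj_idem, proj_idem, hPQ, hQP,
      add_zero, zero_add]
  have hcontr : ∀ x : Fin T → ℝ,
      x ⬝ᵥ (((Um A + Um B)ᴴ * (Um A + Um B)) *ᵥ x) ≤ x ⬝ᵥ x := by
    intro x
    rw [hUU]
    exact contraction_of_symm_idem _ hQs hQi x
  have hle := trace_le_nuclearNorm (A + B) (Um A + Um B) hcontr
  have htr : Matrix.trace ((Um A + Um B)ᴴ * (A + B)) = nuclearNorm A + nuclearNorm B := by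
    rw [Matrix.conjTranspose_add, Matrix.add_mul, Matrix.mul_add, Matrix.mul_add,
      htrAB, htrBA, add_zero, zero_add, Matrix.trace_add, trace_Um, trace_Um]
  rw [htr] at hle
  exact hle

end NucAux

/-- Nuclear-norm decomposability bound: if `rank Θ₀ ≤ R` and the
orthogonal projections `M_Λ`, `M_Γ` annihilate the column and row spaces of `Θ₀`,
then `‖Θ₀ + Δ‖_nuc ≥ ‖Θ₀‖_nuc + ‖M_Λ Δ M_Γ‖_nuc − ‖Δ − M_Λ Δ M_Γ‖_nuc`. -/
theorem nuclearNorm_add_ge_decomposability {N T R : ℕ}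
    (Θ₀ Δ : Matrix (Fin N) (Fin T) ℝ) (hrank : Θ₀.rank ≤ R)
    (MΛ : Matrix (Fin N) (Fin N) ℝ) (MΓ : Matrix (Fin T) (Fin T) ℝ)
    (hΛs : MΛᵀ = MΛ) (hΛi : MΛ * MΛ = MΛ) (hΓs : MΓᵀ = MΓ) (hΓi : MΓ * MΓ = MΓ)
    (hann1 : MΛ * Θ₀ = 0) (hann2 : Θ₀ * MΓ = 0) :
    nuclearNorm Θ₀ + nuclearNorm (MΛ * Δ * MΓ) - nuclearNorm (Δ - MΛ * Δ * MΓ)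
      ≤ nuclearNorm (Θ₀ + Δ) := by
  set B : Matrix (Fin N) (Fin T) ℝ := MΛ * Δ * MΓ with hB
  have hTM : Θ₀ᵀ * MΛ = 0 := by
    rw [← hΛs, ← Matrix.transpose_mul, hann1, Matrix.transpose_zero]
  have h1 : Θ₀ᴴ * B = 0 := by
    rw [Matrix.conjTranspose_eq_transpose_of_trivial, hB, ← Matrix.mul_assoc,
      ← Matrix.mul_assoc, hTM, Matrix.zero_mul, Matrix.zero_mul]
  have h2 : Θ₀ * Bᴴ = 0 := by
    rw [Matrix.conjTranspose_eq_transpose_of_trivial, hB, Matrix.transpose_mul,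
      ← Matrix.mul_assoc, hΓs, hann2, Matrix.zero_mul]
  have add1 : nuclearNorm Θ₀ + nuclearNorm B ≤ nuclearNorm (Θ₀ + B) :=
    NucAux.nuclearNorm_add_of_orth Θ₀ B h1 h2
  have hsplit : Θ₀ + B = (Θ₀ + Δ) + -(Δ - B) := by abel
  have tri : nuclearNorm (Θ₀ + B) ≤ nuclearNorm (Θ₀ + Δ) + nuclearNorm (Δ - B) := by
    rw [hsplit]
    calc nuclearNorm ((Θ₀ + Δ) + -(Δ - B))
        ≤ nuclearNorm (Θ₀ + Δ) + nuclearNorm (-(Δ - B)) := NucAux.nuclearNorm_add_le _ _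
      _ = nuclearNorm (Θ₀ + Δ) + nuclearNorm (Δ - B) := by rw [NucAux.nuclearNorm_neg]
  linarith
end

section
/- Let Δ_β ∈ ℝ^d, Δ_Θ ∈ ℝ^{N×T}, and suppose the cone condition ‖M_{Λ₀}Δ_Θ M_{Γ₀}‖_nuc ≤ c₀(√(NT)‖Δ_β‖ + ‖Δ_Θ − M_{Λ₀}Δ_Θ M_{Γ₀}‖_nuc) holds, where M_{Λ₀}, M_{Γ₀} are orthogonal projections with rank(I − M_{Λ₀}) ≤ R and rank(I − M_{Γ₀}) ≤ R. Then ‖Δ_Θ‖_nuc ≤ 2(1 + c₀)√(2R) · (√(NT)‖Δ_β‖ + ‖Δ_Θ‖_F). -/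
open Matrix BigOperators MeasureTheory ProbabilityTheory

namespace SVDaux
variable {N T : ℕ}

noncomputable def ev (M : Matrix (Fin N) (Fin T) ℝ) : Fin T → ℝ :=
  (Matrix.isHermitian_conjTranspose_mul_self M).eigenvalues

noncomputable def rv (M : Matrix (Fin N) (Fin T) ℝ) (j : Fin T) : Fin T → ℝ :=
  ((Matrix.isHermitian_conjTranspose_mul_self M).eigenvectorBasis j : EuclideanSpace ℝ (Fin T))

noncomputable def lv (M : Matrix (Fin N) (Fin T) ℝ) (j : Fin T) : Fin N → ℝ :=
  (singularValues M j)⁻¹ • (M *ᵥ rv M j)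

lemma ev_nonneg (M : Matrix (Fin N) (Fin T) ℝ) (j : Fin T) : 0 ≤ ev M j :=
  Matrix.eigenvalues_conjTranspose_mul_self_nonneg M j

lemma sv_nonneg (M : Matrix (Fin N) (Fin T) ℝ) (j : Fin T) : 0 ≤ singularValues M j :=
  Real.sqrt_nonneg _

lemma sq_sv (M : Matrix (Fin N) (Fin T) ℝ) (j : Fin T) :
    singularValues M j ^ 2 = ev M j := Real.sq_sqrt (ev_nonneg M j)

lemma ct_eq (M : Matrix (Fin N) (Fin T) ℝ) : Mᴴ = Mᵀ := by
  ext i j; simp [conjTranspose_apply]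

lemma inner_eq_dot (x y : EuclideanSpace ℝ (Fin T)) :
    (inner ℝ x y : ℝ) = (x : Fin T → ℝ) ⬝ᵥ (y : Fin T → ℝ) := by
  simp [PiLp.inner_apply, dotProduct, RCLike.inner_apply, mul_comm]

lemma rv_dot (M : Matrix (Fin N) (Fin T) ℝ) (i j : Fin T) :
    rv M i ⬝ᵥ rv M j = if i = j then 1 else 0 := by
  have h := (Matrix.isHermitian_conjTranspose_mul_self M).eigenvectorBasis.orthonormal
  rw [orthonormal_iff_ite] at h
  rw [rv, rv, ← inner_eq_dot]
  exact h i j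

lemma H_mulVec (M : Matrix (Fin N) (Fin T) ℝ) (j : Fin T) :
    (Mᵀ * M) *ᵥ rv M j = ev M j • rv M j := by
  have := (Matrix.isHermitian_conjTranspose_mul_self M).mulVec_eigenvectorBasis j
  rw [← ct_eq]
  exact this

lemma Mv_dot (M : Matrix (Fin N) (Fin T) ℝ) (i j : Fin T) :
    (M *ᵥ rv M i) ⬝ᵥ (M *ᵥ rv M j) = ev M j * (if i = j then 1 else 0) := by
  have h1 : (M *ᵥ rv M i) ⬝ᵥ (M *ᵥ rv M j) = rv M i ⬝ᵥ ((Mᵀ * M) *ᵥ rv M j) := by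
    rw [← Matrix.mulVec_mulVec, Matrix.dotProduct_mulVec (rv M i) Mᵀ,
      Matrix.vecMul_transpose]
  rw [h1, H_mulVec, dotProduct_smul, smul_eq_mul, rv_dot]

lemma Mv_eq_zero (M : Matrix (Fin N) (Fin T) ℝ) (j : Fin T) (h : ev M j = 0) :
    M *ᵥ rv M j = 0 := by
  have := Mv_dot M j j
  simp [h] at this
  exact this

lemma Mv_eq (M : Matrix (Fin N) (Fin T) ℝ) (j : Fin T) :
    M *ᵥ rv M j = singularValues M j • lv M j := by
  rcases eq_or_ne (singularValues M j) 0 with h | h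
  · have hev : ev M j = 0 := by
      have := sq_sv M j; rw [h] at this; simpa using this.symm
    simp [h, Mv_eq_zero M j hev]
  · rw [lv, smul_smul, mul_inv_cancel₀ h, one_smul]

lemma lv_dot_Mv (M : Matrix (Fin N) (Fin T) ℝ) (j : Fin T) :
    lv M j ⬝ᵥ (M *ᵥ rv M j) = singularValues M j := by
  rcases eq_or_ne (singularValues M j) 0 with h | h
  · have hev : ev M j = 0 := by
      have := sq_sv M j; rw [h] at this; simpa using this.symm
    simp [Mv_eq_zero M j hev, h]
  · rw [lv, smul_dotProduct, Mv_dot, ← sq_sv, smul_eq_mul]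
    field_simp
    simp

lemma lv_dot_orth (M : Matrix (Fin N) (Fin T) ℝ) {i j : Fin T} (hij : i ≠ j) :
    lv M i ⬝ᵥ lv M j = 0 := by
  rw [lv, lv, smul_dotProduct, dotProduct_smul, Mv_dot]
  simp [hij]

lemma lv_dot_self_le (M : Matrix (Fin N) (Fin T) ℝ) (j : Fin T) :
    lv M j ⬝ᵥ lv M j ≤ 1 := by
  rw [lv, smul_dotProduct, dotProduct_smul, Mv_dot]
  rcases eq_or_ne (singularValues M j) 0 with h | h
  · simp [h]
  · rw [← sq_sv]
    simp only [if_pos rfl, mul_one, smul_eq_mul]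
    rw [sq]
    field_simp
    simp

lemma dot_sum {n : ℕ} {ι : Type*} (s : Finset ι) (x : Fin n → ℝ) (f : ι → Fin n → ℝ) :
    x ⬝ᵥ (∑ j ∈ s, f j) = ∑ j ∈ s, x ⬝ᵥ f j := by
  simp [dotProduct, Finset.sum_apply, Finset.mul_sum]
  exact Finset.sum_comm
lemma sum_dot {n : ℕ} {ι : Type*} (s : Finset ι) (x : Fin n → ℝ) (f : ι → Fin n → ℝ) :
    (∑ j ∈ s, f j) ⬝ᵥ x = ∑ j ∈ s, f j ⬝ᵥ x := by
  simp [dotProduct, Finset.sum_apply, Finset.sum_mul]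
  exact Finset.sum_comm
lemma mulVec_sum2 {m n : ℕ} {ι : Type*} (s : Finset ι) (M : Matrix (Fin m) (Fin n) ℝ)
    (f : ι → Fin n → ℝ) : M *ᵥ (∑ j ∈ s, f j) = ∑ j ∈ s, M *ᵥ f j := by
  have := map_sum (Matrix.mulVecLin M) f s
  simp only [Matrix.mulVecLin_apply] at this; exact this

lemma expand_vec (M : Matrix (Fin N) (Fin T) ℝ) (x : Fin T → ℝ) :
    x = ∑ k, (rv M k ⬝ᵥ x) • rv M k := by
  have h := (Matrix.isHermitian_conjTranspose_mul_self M).eigenvectorBasis.sum_repr'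
    ((WithLp.equiv 2 (Fin T → ℝ)).symm x)
  have h2 := congrArg (WithLp.ofLp) h
  simp only [WithLp.ofLp_sum, WithLp.ofLp_smul] at h2
  refine h2.symm.trans ?_
  exact Finset.sum_congr rfl fun k _ => by rw [inner_eq_dot]; rfl

lemma expand_mulVec (M : Matrix (Fin N) (Fin T) ℝ) (x : Fin T → ℝ) :
    M *ᵥ x = ∑ k, (rv M k ⬝ᵥ x) • (M *ᵥ rv M k) := by
  conv_lhs => rw [expand_vec M x]
  rw [mulVec_sum2 Finset.univ M _]
  exact Finset.sum_congr rfl fun k _ => by rw [Matrix.mulVec_smul]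

lemma bessel {m n : ℕ} (w : Fin m → (Fin n → ℝ))
    (horth : ∀ i j, i ≠ j → w i ⬝ᵥ w j = 0) (hnorm : ∀ j, w j ⬝ᵥ w j ≤ 1)
    (x : Fin n → ℝ) : ∑ j, (w j ⬝ᵥ x) ^ 2 ≤ x ⬝ᵥ x := by
  classical
  set c : Fin m → ℝ := fun j => w j ⬝ᵥ x with hc
  set S : Fin n → ℝ := ∑ j, c j • w j with hS
  have h0 : 0 ≤ (x - S) ⬝ᵥ (x - S) := by
    rw [dotProduct]
    exact Finset.sum_nonneg fun i _ => mul_self_nonneg _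
  have hxS : x ⬝ᵥ S = ∑ j, c j ^ 2 := by
    rw [hS, dot_sum]
    refine Finset.sum_congr rfl fun j _ => ?_
    rw [dotProduct_smul, smul_eq_mul, dotProduct_comm]
    simp only [hc]; ring
  have hwsel : ∀ j : Fin m, 0 ≤ w j ⬝ᵥ w j := by
    intro j; rw [dotProduct]; exact Finset.sum_nonneg fun i _ => mul_self_nonneg _
  have hSS : S ⬝ᵥ S ≤ ∑ j, c j ^ 2 := by
    rw [hS, sum_dot]
    have : ∀ i : Fin m, (c i • w i) ⬝ᵥ (∑ j, c j • w j) = c i ^ 2 * (w i ⬝ᵥ w i) := by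
      intro i
      rw [dot_sum]
      rw [Finset.sum_eq_single i]
      · simp only [smul_eq_mul, smul_dotProduct, dotProduct_smul]; ring
      · intro j _ hji
        rw [smul_dotProduct, dotProduct_smul, horth i j (Ne.symm hji)]
        simp
      · intro h; exact absurd (Finset.mem_univ i) h
    rw [Finset.sum_congr rfl fun i _ => this i]
    refine Finset.sum_le_sum fun i _ => ?_
    calc c i ^ 2 * (w i ⬝ᵥ w i) ≤ c i ^ 2 * 1 :=
          mul_le_mul_of_nonneg_left (hnorm i) (sq_nonneg _)
      _ = c i ^ 2 := mul_one _
  have hexp : (x - S) ⬝ᵥ (x - S) = x ⬝ᵥ x - 2 * (x ⬝ᵥ S) + S ⬝ᵥ S := by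
    rw [sub_dotProduct, dotProduct_sub, dotProduct_sub,
      dotProduct_comm S x]
    ring
  have := h0
  rw [hexp, hxS] at this
  linarith

lemma dual_le (M : Matrix (Fin N) (Fin T) ℝ) (u : Fin T → Fin N → ℝ) (v : Fin T → Fin T → ℝ)
    (hu_o : ∀ i j, i ≠ j → u i ⬝ᵥ u j = 0) (hu_n : ∀ j, u j ⬝ᵥ u j ≤ 1)
    (hv_o : ∀ i j, i ≠ j → v i ⬝ᵥ v j = 0) (hv_n : ∀ j, v j ⬝ᵥ v j ≤ 1) :
    ∑ j, u j ⬝ᵥ (M *ᵥ v j) ≤ nuclearNorm M := by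
  classical
  have key : ∀ j, u j ⬝ᵥ (M *ᵥ v j)
      = ∑ k, singularValues M k * ((rv M k ⬝ᵥ v j) * (u j ⬝ᵥ lv M k)) := by
    intro j
    rw [expand_mulVec M (v j), dot_sum]
    refine Finset.sum_congr rfl fun k _ => ?_
    rw [Mv_eq, dotProduct_smul, dotProduct_smul, smul_eq_mul, smul_eq_mul]
    ring
  rw [Finset.sum_congr rfl fun j _ => key j, Finset.sum_comm]
  have hterm : ∀ k, ∑ j, singularValues M k * ((rv M k ⬝ᵥ v j) * (u j ⬝ᵥ lv M k))
      ≤ singularValues M k := by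
    intro k
    rw [← Finset.mul_sum]
    have hs : ∑ j, (rv M k ⬝ᵥ v j) * (u j ⬝ᵥ lv M k) ≤ 1 := by
      have hcs := Finset.sum_mul_sq_le_sq_mul_sq Finset.univ
        (fun j => rv M k ⬝ᵥ v j) (fun j => u j ⬝ᵥ lv M k)
      have h1 : ∑ j, (rv M k ⬝ᵥ v j) ^ 2 ≤ 1 := by
        have := bessel v hv_o hv_n (rv M k)
        have h2 : rv M k ⬝ᵥ rv M k = 1 := by rw [rv_dot]; simp
        calc ∑ j, (rv M k ⬝ᵥ v j) ^ 2 = ∑ j, (v j ⬝ᵥ rv M k) ^ 2 := by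
              refine Finset.sum_congr rfl fun j _ => by rw [dotProduct_comm]
          _ ≤ rv M k ⬝ᵥ rv M k := this
          _ = 1 := h2
      have h2 : ∑ j, (u j ⬝ᵥ lv M k) ^ 2 ≤ 1 := by
        have := bessel u hu_o hu_n (lv M k)
        calc ∑ j, (u j ⬝ᵥ lv M k) ^ 2 ≤ lv M k ⬝ᵥ lv M k := this
          _ ≤ 1 := lv_dot_self_le M k
      have hsq : (∑ j, (rv M k ⬝ᵥ v j) * (u j ⬝ᵥ lv M k)) ^ 2 ≤ 1 := by
        calc (∑ j, (rv M k ⬝ᵥ v j) * (u j ⬝ᵥ lv M k)) ^ 2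
            ≤ (∑ j, (rv M k ⬝ᵥ v j) ^ 2) * ∑ j, (u j ⬝ᵥ lv M k) ^ 2 := hcs
          _ ≤ 1 := by
              have ha : 0 ≤ ∑ j, (rv M k ⬝ᵥ v j) ^ 2 :=
                Finset.sum_nonneg fun j _ => sq_nonneg _
              nlinarith
      nlinarith [sq_nonneg ((∑ j, (rv M k ⬝ᵥ v j) * (u j ⬝ᵥ lv M k)) - 1)]
    calc singularValues M k * ∑ j, (rv M k ⬝ᵥ v j) * (u j ⬝ᵥ lv M k)
        ≤ singularValues M k * 1 := mul_le_mul_of_nonneg_left hs (sv_nonneg M k)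
      _ = singularValues M k := mul_one _
  calc ∑ k, ∑ j, singularValues M k * ((rv M k ⬝ᵥ v j) * (u j ⬝ᵥ lv M k))
      ≤ ∑ k, singularValues M k := Finset.sum_le_sum fun k _ => hterm k
    _ = nuclearNorm M := rfl

lemma nuclearNorm_eq (M : Matrix (Fin N) (Fin T) ℝ) :
    nuclearNorm M = ∑ j, lv M j ⬝ᵥ (M *ᵥ rv M j) := by
  rw [nuclearNorm]
  exact Finset.sum_congr rfl fun j _ => (lv_dot_Mv M j).symm

lemma nuclearNorm_add_le (A B : Matrix (Fin N) (Fin T) ℝ) :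
    nuclearNorm (A + B) ≤ nuclearNorm A + nuclearNorm B := by
  rw [nuclearNorm_eq (A + B)]
  have hsplit : ∀ j, lv (A + B) j ⬝ᵥ ((A + B) *ᵥ rv (A + B) j)
      = lv (A + B) j ⬝ᵥ (A *ᵥ rv (A + B) j) + lv (A + B) j ⬝ᵥ (B *ᵥ rv (A + B) j) := by
    intro j
    rw [Matrix.add_mulVec, dotProduct_add]
  rw [Finset.sum_congr rfl fun j _ => hsplit j, Finset.sum_add_distrib]
  have hv_o : ∀ i j, i ≠ j → rv (A + B) i ⬝ᵥ rv (A + B) j = 0 := by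
    intro i j hij; rw [rv_dot]; simp [hij]
  have hv_n : ∀ j, rv (A + B) j ⬝ᵥ rv (A + B) j ≤ 1 := by
    intro j; rw [rv_dot]; simp
  have hu_o : ∀ i j, i ≠ j → lv (A + B) i ⬝ᵥ lv (A + B) j = 0 := fun i j hij =>
    lv_dot_orth (A + B) hij
  have hu_n := lv_dot_self_le (A + B)
  exact add_le_add
    (dual_le A (lv (A + B)) (rv (A + B)) hu_o hu_n hv_o hv_n)
    (dual_le B (lv (A + B)) (rv (A + B)) hu_o hu_n hv_o hv_n)

lemma trace_transpose_mul_self (C : Matrix (Fin N) (Fin T) ℝ) :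
    (Cᵀ * C).trace = ∑ i, ∑ j, (C i j) ^ 2 := by
  rw [Matrix.trace]
  simp only [Matrix.diag_apply, Matrix.mul_apply, Matrix.transpose_apply]
  rw [Finset.sum_comm]
  exact Finset.sum_congr rfl fun i _ => Finset.sum_congr rfl fun j _ => (sq (C i j)).symm

lemma sum_ev_eq (C : Matrix (Fin N) (Fin T) ℝ) :
    ∑ j, ev C j = ∑ i, ∑ j, (C i j) ^ 2 := by
  classical
  have hH := Matrix.isHermitian_conjTranspose_mul_self C
  have hspec := hH.spectral_theorem
  have htr : (Cᴴ * C).trace = (Matrix.diagonal (RCLike.ofReal ∘ hH.eigenvalues)).trace := by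
    conv_lhs => rw [hspec]
    rw [Unitary.conjStarAlgAut_apply, Matrix.trace_mul_cycle, Unitary.coe_star_mul_self hH.eigenvectorUnitary,
      Matrix.one_mul]
  have hct : (Cᴴ * C).trace = (Cᵀ * C).trace := by rw [ct_eq]
  calc ∑ j, ev C j = (Matrix.diagonal (RCLike.ofReal ∘ hH.eigenvalues)).trace := by
        rw [Matrix.trace_diagonal]; rfl
    _ = (Cᵀ * C).trace := by rw [← htr, hct]
    _ = ∑ i, ∑ j, (C i j) ^ 2 := trace_transpose_mul_self C

lemma nuclearNorm_le_sqrt_rank (C : Matrix (Fin N) (Fin T) ℝ) :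
    nuclearNorm C ≤ Real.sqrt (C.rank) * frobNorm C := by
  classical
  set s : Finset (Fin T) := Finset.univ.filter (fun j => ev C j ≠ 0) with hs
  have hsv0 : ∀ j, ev C j = 0 → singularValues C j = 0 := by
    intro j h
    rw [singularValues, show (Matrix.isHermitian_conjTranspose_mul_self C).eigenvalues j = 0 from h]
    exact Real.sqrt_zero
  have h1 : nuclearNorm C = ∑ j ∈ s, singularValues C j := by
    rw [nuclearNorm]
    exact (Finset.sum_filter_of_ne fun j _ hne => by
      intro h0; exact hne (hsv0 j h0)).symm
  have h2 : (∑ j ∈ s, singularValues C j) ^ 2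
      ≤ (s.card : ℝ) * ∑ j ∈ s, (singularValues C j) ^ 2 := by
    have := Finset.sum_mul_sq_le_sq_mul_sq s (fun _ => (1 : ℝ)) (singularValues C)
    simpa using this
  have h3 : ∑ j ∈ s, (singularValues C j) ^ 2 ≤ ∑ i, ∑ j, (C i j) ^ 2 := by
    calc ∑ j ∈ s, (singularValues C j) ^ 2 ≤ ∑ j, (singularValues C j) ^ 2 :=
          Finset.sum_le_sum_of_subset_of_nonneg (Finset.filter_subset _ _)
            (fun j _ _ => sq_nonneg _)
      _ = ∑ j, ev C j := Finset.sum_congr rfl fun j _ => sq_sv C j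
      _ = ∑ i, ∑ j, (C i j) ^ 2 := sum_ev_eq C
  have hcard : s.card = C.rank := by
    have hH := Matrix.isHermitian_conjTranspose_mul_self C
    have hr := hH.rank_eq_card_non_zero_eigs
    rw [Matrix.rank_conjTranspose_mul_self] at hr
    have hcc : Fintype.card {i // hH.eigenvalues i ≠ 0} = s.card := by
      rw [Fintype.card_subtype]
      congr 1
    rw [hr, hcc]
  have hnn : 0 ≤ ∑ j ∈ s, singularValues C j :=
    Finset.sum_nonneg fun j _ => sv_nonneg C j
  have hF : 0 ≤ ∑ i, ∑ j, (C i j) ^ 2 :=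
    Finset.sum_nonneg fun i _ => Finset.sum_nonneg fun j _ => sq_nonneg _
  have hmul : Real.sqrt (C.rank) * frobNorm C
      = Real.sqrt ((C.rank : ℝ) * ∑ i, ∑ j, (C i j) ^ 2) := by
    rw [frobNorm, ← Real.sqrt_mul (by positivity)]
  rw [h1, hmul]
  rw [show ((C.rank : ℝ)) = (s.card : ℝ) by rw [hcard]]
  have hsq : (∑ j ∈ s, singularValues C j) ^ 2 ≤ (s.card : ℝ) * ∑ i, ∑ j, (C i j) ^ 2 :=
    h2.trans (mul_le_mul_of_nonneg_left h3 (by positivity))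
  nlinarith [Real.sq_sqrt (show (0:ℝ) ≤ (s.card : ℝ) * ∑ i, ∑ j, (C i j) ^ 2 by positivity),
    Real.sqrt_nonneg ((s.card : ℝ) * ∑ i, ∑ j, (C i j) ^ 2), hnn, hsq]

lemma matrix_rank_add_le {m n : ℕ} (A B : Matrix (Fin m) (Fin n) ℝ) :
    (A + B).rank ≤ A.rank + B.rank := by
  classical
  have hsub : LinearMap.range (A + B).mulVecLin
      ≤ LinearMap.range A.mulVecLin ⊔ LinearMap.range B.mulVecLin := by
    rintro _ ⟨x, rfl⟩
    rw [Matrix.mulVecLin_add]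
    exact Submodule.add_mem_sup ⟨x, rfl⟩ ⟨x, rfl⟩
  calc (A + B).rank
      ≤ Module.finrank ℝ
        (LinearMap.range A.mulVecLin ⊔ LinearMap.range B.mulVecLin : Submodule ℝ (Fin m → ℝ)) :=
        Submodule.finrank_mono hsub
    _ ≤ A.rank + B.rank :=
        Submodule.finrank_add_le_finrank_add_finrank _ _

lemma cross_trace_zero (Δ : Matrix (Fin N) (Fin T) ℝ) (P : Matrix (Fin N) (Fin N) ℝ)
    (Q : Matrix (Fin T) (Fin T) ℝ) (hPs : Pᵀ = P) (hPi : P * P = P)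
    (hQs : Qᵀ = Q) (hQi : Q * Q = Q) :
    ((P * Δ * Q)ᵀ * (Δ - P * Δ * Q)).trace = 0 := by
  have hFt : (P * Δ * Q)ᵀ = Q * (Δᵀ * P) := by
    rw [Matrix.transpose_mul, Matrix.transpose_mul, hPs, hQs]
  rw [hFt, Matrix.mul_sub, Matrix.trace_sub]
  have key : (Q * (Δᵀ * P) * (P * Δ * Q)).trace = (Q * (Δᵀ * P) * Δ).trace := by
    have h1 : Q * (Δᵀ * P) * (P * Δ * Q) = (Q * (Δᵀ * P) * Δ) * Q := by
      have : Q * (Δᵀ * P) * (P * Δ * Q) = Q * Δᵀ * (P * P) * Δ * Q := by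
        simp only [Matrix.mul_assoc]
      rw [this, hPi]
      simp only [Matrix.mul_assoc]
    rw [h1, Matrix.trace_mul_comm, ← Matrix.mul_assoc]
    have h2 : Q * (Q * (Δᵀ * P)) = Q * (Δᵀ * P) := by
      rw [← Matrix.mul_assoc, hQi]
    rw [h2]
  rw [key, sub_self]

lemma frob_sq_nonneg (A : Matrix (Fin N) (Fin T) ℝ) : 0 ≤ ∑ i, ∑ j, (A i j) ^ 2 :=
  Finset.sum_nonneg fun i _ => Finset.sum_nonneg fun j _ => sq_nonneg _

lemma frob_sub_le (Δ : Matrix (Fin N) (Fin T) ℝ) (P : Matrix (Fin N) (Fin N) ℝ)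
    (Q : Matrix (Fin T) (Fin T) ℝ) (hPs : Pᵀ = P) (hPi : P * P = P)
    (hQs : Qᵀ = Q) (hQi : Q * Q = Q) :
    frobNorm (Δ - P * Δ * Q) ≤ frobNorm Δ := by
  set F := P * Δ * Q with hF
  set E := Δ - F with hE
  have hsplit : Δ = F + E := by rw [hE]; abel
  have hcross : (Fᵀ * E).trace = 0 := cross_trace_zero Δ P Q hPs hPi hQs hQi
  have hcross' : (Eᵀ * F).trace = 0 := by
    have : Eᵀ * F = (Fᵀ * E)ᵀ := by
      rw [Matrix.transpose_mul, Matrix.transpose_transpose]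
    rw [this, Matrix.trace_transpose, hcross]
  have hexp : (Δᵀ * Δ).trace = (Fᵀ * F).trace + (Eᵀ * E).trace := by
    conv_lhs => rw [hsplit]
    rw [Matrix.transpose_add, Matrix.add_mul, Matrix.mul_add, Matrix.mul_add,
      Matrix.trace_add, Matrix.trace_add, Matrix.trace_add, hcross, hcross']
    ring
  have hEt : ∑ i, ∑ j, (E i j) ^ 2 ≤ ∑ i, ∑ j, (Δ i j) ^ 2 := by
    have h1 := trace_transpose_mul_self E
    have h2 := trace_transpose_mul_self Δ
    have h3 := trace_transpose_mul_self F
    have hFnn : 0 ≤ (Fᵀ * F).trace := by rw [h3]; exact frob_sq_nonneg F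
    rw [← h1, ← h2, hexp]
    linarith
  rw [frobNorm, frobNorm]
  exact Real.sqrt_le_sqrt hEt

lemma rank_sub_le (Δ : Matrix (Fin N) (Fin T) ℝ) (P : Matrix (Fin N) (Fin N) ℝ)
    (Q : Matrix (Fin T) (Fin T) ℝ) :
    (Δ - P * Δ * Q).rank ≤ (1 - P).rank + (1 - Q).rank := by
  have hdecomp : Δ - P * Δ * Q = (1 - P) * Δ + (P * Δ) * (1 - Q) := by
    rw [Matrix.sub_mul, Matrix.mul_sub, Matrix.one_mul, Matrix.mul_one]
    abel
  rw [hdecomp]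
  calc ((1 - P) * Δ + (P * Δ) * (1 - Q)).rank
      ≤ ((1 - P) * Δ).rank + ((P * Δ) * (1 - Q)).rank := matrix_rank_add_le _ _
    _ ≤ (1 - P).rank + (1 - Q).rank :=
        add_le_add (Matrix.rank_mul_le_left _ _) (Matrix.rank_mul_le_right _ _)

end SVDaux

/-- Under the cone condition, the nuclear norm of `Δ_Θ` is
controlled: `‖Δ_Θ‖_nuc ≤ 2(1+c₀)√(2R)(√(NT)‖Δ_β‖ + ‖Δ_Θ‖_F)`. -/
theorem nuclearNorm_le_of_cone {N T d R : ℕ} (hR : 1 ≤ R) (c₀ : ℝ) (hc₀ : 0 < c₀)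
    (Δβ : Fin d → ℝ) (ΔΘ : Matrix (Fin N) (Fin T) ℝ)
    (MΛ : Matrix (Fin N) (Fin N) ℝ) (MΓ : Matrix (Fin T) (Fin T) ℝ)
    (hΛs : MΛᵀ = MΛ) (hΛi : MΛ * MΛ = MΛ) (hΓs : MΓᵀ = MΓ) (hΓi : MΓ * MΓ = MΓ)
    (hΛr : (1 - MΛ).rank ≤ R) (hΓr : (1 - MΓ).rank ≤ R)
    (hcone : nuclearNorm (MΛ * ΔΘ * MΓ)
        ≤ c₀ * (Real.sqrt ((N:ℝ)*T) * Real.sqrt (∑ k, (Δβ k)^2)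
            + nuclearNorm (ΔΘ - MΛ * ΔΘ * MΓ))) :
    nuclearNorm ΔΘ ≤ 2 * (1 + c₀) * Real.sqrt (2*R)
        * (Real.sqrt ((N:ℝ)*T) * Real.sqrt (∑ k, (Δβ k)^2) + frobNorm ΔΘ) := by
  classical
  set a := Real.sqrt ((N:ℝ)*T) * Real.sqrt (∑ k, (Δβ k)^2) with ha
  set F := ΔΘ - MΛ * ΔΘ * MΓ with hFdef
  have ha0 : 0 ≤ a := mul_nonneg (Real.sqrt_nonneg _) (Real.sqrt_nonneg _)
  have hf0 : 0 ≤ frobNorm ΔΘ := Real.sqrt_nonneg _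
  have htri : nuclearNorm ΔΘ ≤ nuclearNorm (MΛ * ΔΘ * MΓ) + nuclearNorm F := by
    have hsp : ΔΘ = MΛ * ΔΘ * MΓ + F := by rw [hFdef]; abel
    calc nuclearNorm ΔΘ = nuclearNorm (MΛ * ΔΘ * MΓ + F) := by rw [← hsp]
      _ ≤ _ := SVDaux.nuclearNorm_add_le _ _
  have hrankN : F.rank ≤ 2 * R := by
    have h1 := SVDaux.rank_sub_le ΔΘ MΛ MΓ
    rw [← hFdef] at h1
    omega
  have hrank : (F.rank : ℝ) ≤ 2 * (R : ℝ) := by exact_mod_cast hrankN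
  have hfsub : frobNorm F ≤ frobNorm ΔΘ := SVDaux.frob_sub_le ΔΘ MΛ MΓ hΛs hΛi hΓs hΓi
  have hfF0 : 0 ≤ frobNorm F := Real.sqrt_nonneg _
  have hF2 : nuclearNorm F ≤ Real.sqrt (2 * R) * frobNorm ΔΘ := by
    calc nuclearNorm F ≤ Real.sqrt (F.rank) * frobNorm F :=
          SVDaux.nuclearNorm_le_sqrt_rank F
      _ ≤ Real.sqrt (2 * R) * frobNorm ΔΘ :=
          mul_le_mul (Real.sqrt_le_sqrt hrank) hfsub hfF0 (Real.sqrt_nonneg _)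
  have hs1 : (1 : ℝ) ≤ Real.sqrt (2 * R) := by
    rw [show (1:ℝ) = Real.sqrt 1 from Real.sqrt_one.symm]
    apply Real.sqrt_le_sqrt
    have : (1 : ℝ) ≤ (R : ℝ) := by exact_mod_cast hR
    linarith
  have hnF0 : 0 ≤ nuclearNorm F :=
    Finset.sum_nonneg fun j _ => SVDaux.sv_nonneg F j
  have step : nuclearNorm ΔΘ ≤ c₀ * a + (1 + c₀) * nuclearNorm F := by
    calc nuclearNorm ΔΘ ≤ nuclearNorm (MΛ * ΔΘ * MΓ) + nuclearNorm F := htri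
      _ ≤ c₀ * (a + nuclearNorm F) + nuclearNorm F := by linarith [hcone]
      _ = c₀ * a + (1 + c₀) * nuclearNorm F := by ring
  have hc1 : (0:ℝ) ≤ 1 + c₀ := by linarith
  nlinarith [mul_nonneg (sub_nonneg.mpr hs1) ha0,
    mul_nonneg (sub_nonneg.mpr hs1) hf0,
    mul_nonneg hc₀.le ha0,
    mul_le_mul_of_nonneg_left hF2 hc1,
    mul_nonneg hc₀.le (mul_nonneg (sub_nonneg.mpr hs1) ha0)]
end
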